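/- MOTP is not a metric: for every threshold thr > 0 there exist T ∈ ℕ and configurations A, B, C, each consisting of m = 2 hole-free trajectories of length T taking values in ℝ, such that for every CLEAR-MOT association Σ_AB for (A, B), every CLEAR-MOT association Σ_AC for (A, C), and every CLEAR-MOT association Σ_CB for (C, B) (all with threshold thr), one has Σ_{t=1}^{T} Σ_{i=1}^{2} |A_i(t) − B_{σ_AB(t)(i)}(t)| > Σ_{t=1}^{T} Σ_{i=1}^{2} |A_i(t) − C_{σ_AC(t)(i)}(t)| + Σ_{t=1}^{T} Σ_{i=1}^{2} |C_i(t) − B_{σ_CB(t)(i)}(t)|; that is, the MOTP distance violates the triangle inequality. -/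
import Mathlib


/-- `Σ` is a CLEAR-MOT association for `(A, B)` with threshold `thr`: `σ(1)` is a
minimum-cost matching, and at each later instant the matches within distance `thr` are
anchored while the remaining components are chosen to minimize the cost among all
permutations respecting the anchored matches. -/
def IsClearMot {m T : ℕ} (thr : ℝ) (A B : Fin m → Fin T → ℝ)
    (S : Fin T → Equiv.Perm (Fin m)) : Prop :=
  (∀ (h0 : 0 < T) (σ : Equiv.Perm (Fin m)),
    ∑ i, |A i ⟨0, h0⟩ - B (S ⟨0, h0⟩ i) ⟨0, h0⟩|
      ≤ ∑ i, |A i ⟨0, h0⟩ - B (σ i) ⟨0, h0⟩|) ∧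
  ∀ t : Fin (T - 1),
    let prev : Fin T := ⟨t.1, by have := t.2; omega⟩
    let cur : Fin T := ⟨t.1 + 1, by have := t.2; omega⟩
    (∀ i, |A i cur - B (S prev i) cur| < thr → S cur i = S prev i) ∧
    ∀ σ : Equiv.Perm (Fin m),
      (∀ i, |A i cur - B (S prev i) cur| < thr → σ i = S prev i) →
      ∑ i, |A i cur - B (S cur i) cur| ≤ ∑ i, |A i cur - B (σ i) cur|

/-- The MOTP distance associated to an association `Σ`:
`∑_{t} ∑_{i} |A_i(t) − B_{σ(t)(i)}(t)|`. -/
def motp {m T : ℕ} (A B : Fin m → Fin T → ℝ) (S : Fin T → Equiv.Perm (Fin m)) : ℝ :=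
  ∑ t, ∑ i, |A i t - B (S t i) t|

lemma perm2_eq_one : ∀ σ : Equiv.Perm (Fin 2), σ 0 = 0 → σ = 1 := by decide

lemma perm2_eq_swap : ∀ σ : Equiv.Perm (Fin 2), σ 0 = 1 → σ = Equiv.swap 0 1 := by decide

lemma perm2_cases : ∀ σ : Equiv.Perm (Fin 2), σ = 1 ∨ σ = Equiv.swap 0 1 := by decide

/-- MOTP is not a metric: for every threshold `thr > 0` there exist `T` and
configurations `A, B, C` of `m = 2` hole-free real-valued trajectories such that the
MOTP distances (computed along any CLEAR-MOT associations) violate the triangle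
inequality: `MOTP(A, B) > MOTP(A, C) + MOTP(C, B)`. -/
theorem motp_not_metric (thr : ℝ) (hthr : 0 < thr) :
    ∃ (T : ℕ) (A B C : Fin 2 → Fin T → ℝ),
      ∀ SAB SAC SCB : Fin T → Equiv.Perm (Fin 2),
        IsClearMot thr A B SAB → IsClearMot thr A C SAC → IsClearMot thr C B SCB →
        motp A C SAC + motp C B SCB < motp A B SAB := by
  set c := thr / 2 with hc
  have hcpos : 0 < c := by positivity
  refine ⟨4,
    (fun i _ => if i = 0 then 0 else c),
    (fun i t => if t = 0 then (if i = 0 then c else 0) else (if i = 0 then 0 else c)),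
    (fun i t => if t = 1 then (if i = 0 then -c else thr) else (if i = 0 then 0 else c)),
    ?_⟩
  intro SAB SAC SCB hAB hAC hCB
  set A : Fin 2 → Fin 4 → ℝ := (fun i _ => if i = 0 then 0 else c) with hA
  set B : Fin 2 → Fin 4 → ℝ :=
    (fun i t => if t = 0 then (if i = 0 then c else 0) else (if i = 0 then 0 else c)) with hB
  set C : Fin 2 → Fin 4 → ℝ :=
    (fun i t => if t = 1 then (if i = 0 then -c else thr) else (if i = 0 then 0 else c)) with hC
  have habsc : |c| = c := abs_of_nonneg hcpos.le
  -- SAB 0 = swap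
  have hAB0 : SAB 0 = Equiv.swap 0 1 := by
    rcases perm2_cases (SAB 0) with h | h
    · exfalso
      have key := hAB.1 (by norm_num) (Equiv.swap 0 1)
      rw [show (⟨0, by norm_num⟩ : Fin 4) = 0 from rfl] at key
      simp only [h, Fin.sum_univ_two, Equiv.Perm.one_apply, Equiv.swap_apply_left,
        Equiv.swap_apply_right, hA, hB] at key
      norm_num [habsc, abs_sub_comm] at key
      linarith
    · exact h
  -- SAB 1,2,3 = swap (anchored)
  have hAB1 : SAB 1 = Equiv.swap 0 1 := by
    have h := (hAB.2 ⟨0, by norm_num⟩).1 0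
    simp only [hA, hB] at h
    simp [hAB0] at h
    exact perm2_eq_swap _ (h (by rw [habsc]; linarith))
  have hAB2 : SAB 2 = Equiv.swap 0 1 := by
    have h := (hAB.2 ⟨1, by norm_num⟩).1 0
    simp only [hA, hB] at h
    simp [hAB1] at h
    exact perm2_eq_swap _ (h (by rw [habsc]; linarith))
  have hAB3 : SAB 3 = Equiv.swap 0 1 := by
    have h := (hAB.2 ⟨2, by norm_num⟩).1 0
    simp only [hA, hB] at h
    simp [hAB2] at h
    exact perm2_eq_swap _ (h (by rw [habsc]; linarith))
  -- SAC 0 = 1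
  have hAC0 : SAC 0 = 1 := by
    rcases perm2_cases (SAC 0) with h | h
    · exact h
    · exfalso
      have key := hAC.1 (by norm_num) 1
      rw [show (⟨0, by norm_num⟩ : Fin 4) = 0 from rfl] at key
      simp only [h, Fin.sum_univ_two, Equiv.Perm.one_apply, Equiv.swap_apply_left,
        Equiv.swap_apply_right, hA, hC] at key
      norm_num [habsc, abs_sub_comm] at key
      linarith
  -- SAC 1,2,3 = 1 (anchored at i = 0)
  have hAC1 : SAC 1 = 1 := by
    have h := (hAC.2 ⟨0, by norm_num⟩).1 0
    simp only [hA, hC] at h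
    simp [hAC0] at h
    exact perm2_eq_one _ (h (by rw [habsc]; linarith))
  have hAC2 : SAC 2 = 1 := by
    have h := (hAC.2 ⟨1, by norm_num⟩).1 0
    simp only [hA, hC] at h
    simp [hAC1] at h
    exact perm2_eq_one _ (h (by linarith))
  have hAC3 : SAC 3 = 1 := by
    have h := (hAC.2 ⟨2, by norm_num⟩).1 0
    simp only [hA, hC] at h
    simp [hAC2] at h
    exact perm2_eq_one _ (h (by linarith))
  -- SCB 0 = swap
  have hCB0 : SCB 0 = Equiv.swap 0 1 := by
    rcases perm2_cases (SCB 0) with h | h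
    · exfalso
      have key := hCB.1 (by norm_num) (Equiv.swap 0 1)
      rw [show (⟨0, by norm_num⟩ : Fin 4) = 0 from rfl] at key
      simp only [h, Fin.sum_univ_two, Equiv.Perm.one_apply, Equiv.swap_apply_left,
        Equiv.swap_apply_right, hB, hC] at key
      norm_num [habsc, abs_sub_comm] at key
      linarith
    · exact h
  -- SCB 1 = 1 (unanchored, re-optimized)
  have hCB1 : SCB 1 = 1 := by
    rcases perm2_cases (SCB 1) with h | h
    · exact h
    · exfalso
      have key := (hCB.2 ⟨0, by norm_num⟩).2 1 ?_
      · simp only [hB, hC] at key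
        simp [h, hCB0, Fin.sum_univ_two] at key
        rw [show -c - c = -(2*c) by ring, abs_neg, abs_of_nonneg (by linarith),
          abs_of_nonneg hthr.le, abs_of_nonneg hcpos.le,
          show |thr - c| = c by rw [show thr - c = c by rw [hc]; ring, habsc]] at key
        linarith
      · intro i hi
        exfalso
        have hthr2 : thr = 2 * c := by rw [hc]; ring
        fin_cases i
        · simp only [hB, hC] at hi
          simp [hCB0] at hi
          rw [show -c - c = -(2*c) by ring, abs_neg, abs_of_nonneg (by linarith)] at hi
          linarith
        · simp only [hB, hC] at hi
          simp [hCB0] at hi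
          rw [abs_of_nonneg hthr.le] at hi
          linarith
  have hCB2 : SCB 2 = 1 := by
    have h := (hCB.2 ⟨1, by norm_num⟩).1 0
    simp only [hB, hC] at h
    simp [hCB1] at h
    exact perm2_eq_one _ (h (by linarith))
  have hCB3 : SCB 3 = 1 := by
    have h := (hCB.2 ⟨2, by norm_num⟩).1 0
    simp only [hB, hC] at h
    simp [hCB2] at h
    exact perm2_eq_one _ (h (by linarith))
  -- compute the MOTP values
  simp only [motp, Fin.sum_univ_four, Fin.sum_univ_two, hAB0, hAB1, hAB2, hAB3,
    hAC0, hAC1, hAC2, hAC3, hCB0, hCB1, hCB2, hCB3, Equiv.Perm.one_apply,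
    Equiv.swap_apply_left, Equiv.swap_apply_right, hA, hB, hC]
  simp [habsc, abs_sub_comm]
  rw [show |thr - c| = c by rw [show thr - c = c by rw [hc]; ring, habsc]]
  have hthr2 : thr = 2 * c := by rw [hc]; ring
  linarith
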